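/- Inner nose retraction, general case: let RM(α₁,...,αₙ) be a bi-rainbow meander, m* the middle family index (defined by L* = α₁+...+α_{m*-1} < α/2 ≤ L* + α_{m*}), and R* = α_{m*+1}+...+αₙ. If 0 < |L* − R*| < α_{m*}, then Z(α₁,...,αₙ) = Z(α₁,...,α_{m*-1}, α_{m*} − |L* − R*|, α_{m*+1},...,αₙ). -/

import Mathlib

/-- Upper-arc partner of point `k ∈ {1,…,2·sum}` in a meander whose upper arcs
form consecutive rainbow families of the given sizes (1-indexed points). -/
def upperPartner : List ℕ → ℕ → ℕ
  | [], k => k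
  | a :: rest, k => if k ≤ 2 * a then 2 * a + 1 - k else 2 * a + upperPartner rest (k - 2 * a)

/-- One step along the bi-rainbow meander: upper or lower partner. -/
def meanderRel (l : List ℕ) (x y : ℕ) : Prop :=
  y = upperPartner l x ∨ y = 2 * l.sum + 1 - x

/-- Connectivity relation on the points `{1,…,2α}` of the bi-rainbow meander `RM l`. -/
def meanderSetoid (l : List ℕ) : Setoid {k : ℕ // 1 ≤ k ∧ k ≤ 2 * l.sum} :=
  ⟨fun a b => Relation.EqvGen (fun a b => meanderRel l a.1 b.1) a b,
    Relation.EqvGen.is_equivalence _⟩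

/-- Number of connected components (Jordan curves) of the bi-rainbow meander `RM l`. -/
noncomputable def Z (l : List ℕ) : ℕ := Nat.card (Quotient (meanderSetoid l))


set_option linter.unnecessarySeqFocus false
set_option maxHeartbeats 1000000
lemma UP_cons (a : ℕ) (rest : List ℕ) (k : ℕ) :
    upperPartner (a :: rest) k =
      if k ≤ 2 * a then 2 * a + 1 - k else 2 * a + upperPartner rest (k - 2 * a) := rfl

lemma UP_bounds (l : List ℕ) (k : ℕ) (h1 : 1 ≤ k) (h2 : k ≤ 2 * l.sum) :
    1 ≤ upperPartner l k ∧ upperPartner l k ≤ 2 * l.sum := by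
  induction l generalizing k with
  | nil => simp [upperPartner] at *; omega
  | cons a rest ih =>
    rw [UP_cons]
    rw [List.sum_cons] at h2
    by_cases hk : k ≤ 2 * a
    · rw [if_pos hk]; simp [List.sum_cons]; omega
    · rw [if_neg hk]
      have := ih (k - 2 * a) (by omega) (by omega)
      simp [List.sum_cons]; omega

lemma UP_left (a b : List ℕ) (k : ℕ) (h1 : 1 ≤ k) (h2 : k ≤ 2 * a.sum) :
    upperPartner (a ++ b) k = upperPartner a k := by
  induction a generalizing k with
  | nil => simp at h2; omega
  | cons x xs ih =>
    rw [List.cons_append, UP_cons, UP_cons]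
    rw [List.sum_cons] at h2
    by_cases hk : k ≤ 2 * x
    · rw [if_pos hk, if_pos hk]
    · rw [if_neg hk, if_neg hk, ih (k - 2 * x) (by omega) (by omega)]

lemma UP_right (a b : List ℕ) (k : ℕ) (h : 2 * a.sum < k) :
    upperPartner (a ++ b) k = 2 * a.sum + upperPartner b (k - 2 * a.sum) := by
  induction a generalizing k with
  | nil => simp
  | cons x xs ih =>
    rw [List.cons_append, UP_cons]
    rw [List.sum_cons] at h ⊢
    rw [if_neg (by omega), ih (k - 2 * x) (by omega)]
    have e : k - 2 * x - 2 * xs.sum = k - 2 * (x + xs.sum) := by omega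
    rw [e]; omega

lemma UP_invol (l : List ℕ) (k : ℕ) (h1 : 1 ≤ k) (h2 : k ≤ 2 * l.sum) :
    upperPartner l (upperPartner l k) = k := by
  induction l generalizing k with
  | nil => simp [upperPartner]
  | cons a rest ih =>
    rw [List.sum_cons] at h2
    by_cases hk : k ≤ 2 * a
    · have hin : upperPartner (a :: rest) k = 2 * a + 1 - k := by rw [UP_cons, if_pos hk]
      rw [hin, UP_cons, if_pos (by omega)]; omega
    · have hin : upperPartner (a :: rest) k = 2 * a + upperPartner rest (k - 2 * a) := by
        rw [UP_cons, if_neg hk]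
      have hb := UP_bounds rest (k - 2 * a) (by omega) (by omega)
      rw [hin, UP_cons, if_neg (by omega)]
      have e : 2 * a + upperPartner rest (k - 2 * a) - 2 * a = upperPartner rest (k - 2 * a) := by
        omega
      rw [e, ih (k - 2 * a) (by omega) (by omega)]
      omega

lemma UP_reverse (l : List ℕ) (k : ℕ) (h1 : 1 ≤ k) (h2 : k ≤ 2 * l.sum) :
    upperPartner l.reverse (2 * l.sum + 1 - k) = 2 * l.sum + 1 - upperPartner l k := by
  induction l generalizing k with
  | nil => simp [upperPartner]
  | cons a rest ih =>
    have hsr : (rest.reverse).sum = rest.sum := List.sum_reverse rest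
    rw [List.sum_cons] at h2 ⊢
    rw [List.reverse_cons]
    by_cases hk : k ≤ 2 * a
    · rw [UP_right rest.reverse [a] _ (by omega)]
      have e : 2 * (a + rest.sum) + 1 - k - 2 * rest.reverse.sum = 2 * a + 1 - k := by omega
      rw [e, UP_cons, if_pos (by omega), UP_cons, if_pos hk]
      omega
    · rw [UP_left rest.reverse [a] _ (by omega) (by omega)]
      have e : 2 * (a + rest.sum) + 1 - k = 2 * rest.sum + 1 - (k - 2 * a) := by omega
      rw [e, ih (k - 2 * a) (by omega) (by omega), UP_cons, if_neg hk]
      have hb := UP_bounds rest (k - 2 * a) (by omega) (by omega)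
      omega

lemma card_quotient_eq {α β : Type*} (sa : Setoid α) (sb : Setoid β)
    (f : α → β) (g : β → α)
    (hf : ∀ a b, sa.r a b → sb.r (f a) (f b))
    (hg : ∀ a b, sb.r a b → sa.r (g a) (g b))
    (hgf : ∀ a, sa.r (g (f a)) a)
    (hfg : ∀ b, sb.r (f (g b)) b) :
    Nat.card (Quotient sa) = Nat.card (Quotient sb) := by
  refine Nat.card_congr
    ⟨Quotient.map f (fun _ _ h => hf _ _ h), Quotient.map g (fun _ _ h => hg _ _ h), ?_, ?_⟩
  · intro q
    refine Quotient.inductionOn q (fun a => ?_)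
    exact Quotient.sound (hgf a)
  · intro q
    refine Quotient.inductionOn q (fun b => ?_)
    exact Quotient.sound (hfg b)


lemma Z_reverse (l : List ℕ) : Z l = Z l.reverse := by
  have hs : l.reverse.sum = l.sum := List.sum_reverse l
  unfold Z
  have mir : ∀ (x : ℕ), 1 ≤ x → x ≤ 2 * l.sum → 1 ≤ 2 * l.sum + 1 - x ∧
      2 * l.sum + 1 - x ≤ 2 * l.reverse.sum := by intro x h1 h2; omega
  refine card_quotient_eq (meanderSetoid l) (meanderSetoid l.reverse)
    (fun a => ⟨2 * l.sum + 1 - a.1, mir a.1 a.2.1 a.2.2⟩)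
    (fun b => ⟨2 * l.sum + 1 - b.1, by have := b.2; omega⟩) ?_ ?_ ?_ ?_
  · -- forward morphism
    intro a b hab
    have hab' : Relation.EqvGen (fun a b : {k : ℕ // 1 ≤ k ∧ k ≤ 2 * l.sum} =>
        meanderRel l a.1 b.1) a b := hab
    clear hab
    show Relation.EqvGen _ _ _
    induction hab' with
    | rel a b h =>
      refine Relation.EqvGen.rel _ _ ?_
      rcases h with h | h
      · left
        show 2 * l.sum + 1 - b.1 = upperPartner l.reverse (2 * l.sum + 1 - a.1)
        rw [UP_reverse l a.1 a.2.1 a.2.2, h]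
      · right
        show 2 * l.sum + 1 - b.1 = 2 * l.reverse.sum + 1 - (2 * l.sum + 1 - a.1)
        have ha := a.2; have hb := b.2; omega
    | refl a => exact Relation.EqvGen.refl _
    | symm a b _ ih => exact Relation.EqvGen.symm _ _ ih
    | trans a b c _ _ ih1 ih2 => exact Relation.EqvGen.trans _ _ _ ih1 ih2
  · -- backward morphism
    intro a b hab
    have hab' : Relation.EqvGen (fun a b : {k : ℕ // 1 ≤ k ∧ k ≤ 2 * l.reverse.sum} =>
        meanderRel l.reverse a.1 b.1) a b := hab
    clear hab
    show Relation.EqvGen _ _ _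
    induction hab' with
    | rel a b h =>
      refine Relation.EqvGen.rel _ _ ?_
      rcases h with h | h
      · left
        show 2 * l.sum + 1 - b.1 = upperPartner l (2 * l.sum + 1 - a.1)
        have ha := a.2
        have h2 := UP_reverse l.reverse a.1 a.2.1 a.2.2
        rw [List.reverse_reverse] at h2
        have e : 2 * l.reverse.sum + 1 - a.1 = 2 * l.sum + 1 - a.1 := by omega
        rw [e] at h2
        rw [h, h2]
        omega
      · right
        show 2 * l.sum + 1 - b.1 = 2 * l.sum + 1 - (2 * l.sum + 1 - a.1)
        have ha := a.2; have hb := b.2; omega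
    | refl a => exact Relation.EqvGen.refl _
    | symm a b _ ih => exact Relation.EqvGen.symm _ _ ih
    | trans a b c _ _ ih1 ih2 => exact Relation.EqvGen.trans _ _ _ ih1 ih2
  · intro a
    have e : ((fun b : {k : ℕ // 1 ≤ k ∧ k ≤ 2 * l.reverse.sum} =>
        (⟨2 * l.sum + 1 - b.1, by have := b.2; omega⟩ : {k : ℕ // 1 ≤ k ∧ k ≤ 2 * l.sum}))
        ((fun a : {k : ℕ // 1 ≤ k ∧ k ≤ 2 * l.sum} =>
        (⟨2 * l.sum + 1 - a.1, mir a.1 a.2.1 a.2.2⟩ :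
          {k : ℕ // 1 ≤ k ∧ k ≤ 2 * l.reverse.sum})) a)) = a := by
      apply Subtype.ext
      show 2 * l.sum + 1 - (2 * l.sum + 1 - a.1) = a.1
      have := a.2; omega
    show (meanderSetoid l).r _ a
    exact (congrArg (fun x => (meanderSetoid l).r x a) e).mpr ((meanderSetoid l).iseqv.refl a)
  · intro b
    have e : ((fun a : {k : ℕ // 1 ≤ k ∧ k ≤ 2 * l.sum} =>
        (⟨2 * l.sum + 1 - a.1, mir a.1 a.2.1 a.2.2⟩ :
          {k : ℕ // 1 ≤ k ∧ k ≤ 2 * l.reverse.sum}))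
        ((fun b : {k : ℕ // 1 ≤ k ∧ k ≤ 2 * l.reverse.sum} =>
        (⟨2 * l.sum + 1 - b.1, by have := b.2; omega⟩ :
          {k : ℕ // 1 ≤ k ∧ k ≤ 2 * l.sum})) b)) = b := by
      apply Subtype.ext
      show 2 * l.sum + 1 - (2 * l.sum + 1 - b.1) = b.1
      have := b.2; have := hs; omega
    show (meanderSetoid l.reverse).r _ b
    exact (congrArg (fun x => (meanderSetoid l.reverse).r x b) e).mpr ((meanderSetoid l.reverse).iseqv.refl b)


def IRrho (L R m d v : ℕ) : ℕ :=
  if v ≤ 2 * L then v else if v ≤ m + 2 * R then v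
  else if v ≤ 2 * L + m then 2 * (L + m + R) + 1 - v else v - 2 * d

def IRpsi (R m d v : ℕ) : ℕ := if v ≤ m + 2 * R then v else v + 2 * d

lemma key (l1 l2 : List ℕ) (m : ℕ) (hRL : l2.sum < l1.sum) (hdm : l1.sum - l2.sum < m) :
    Z (l1 ++ m :: l2) = Z (l1 ++ (m - (l1.sum - l2.sum)) :: l2) := by
  have hBs : (l1 ++ m :: l2).sum = l1.sum + m + l2.sum := by rw [List.sum_append, List.sum_cons]; omega
  have hSs : (l1 ++ (m - (l1.sum - l2.sum)) :: l2).sum = l1.sum + (m - (l1.sum - l2.sum)) + l2.sum := by rw [List.sum_append, List.sum_cons]; omega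
  -- upper-partner region formulas
  have hUBl : ∀ x, 1 ≤ x → x ≤ 2 * l1.sum → upperPartner (l1 ++ m :: l2) x = upperPartner l1 x :=
    fun x h1 h2 => UP_left l1 (m :: l2) x h1 h2
  have hUBm : ∀ x, 2 * l1.sum < x → x ≤ 2 * l1.sum + 2 * m →
      upperPartner (l1 ++ m :: l2) x = 4 * l1.sum + 2 * m + 1 - x := by
    intro x hx1 hx2
    rw [UP_right l1 (m :: l2) x hx1, UP_cons, if_pos (by omega)]
    omega
  have hUBr : ∀ x, 2 * l1.sum + 2 * m < x →
      upperPartner (l1 ++ m :: l2) x = 2 * l1.sum + 2 * m + upperPartner l2 (x - (2 * l1.sum + 2 * m)) := by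
    intro x hx
    rw [show l1 ++ m :: l2 = (l1 ++ [m]) ++ l2 by simp]
    have hs2 : (l1 ++ [m]).sum = l1.sum + m := by simp
    rw [UP_right (l1 ++ [m]) l2 x (by rw [hs2]; omega), hs2]
    have e : x - 2 * (l1.sum + m) = x - (2 * l1.sum + 2 * m) := by omega
    rw [e]; omega
  have hUSl : ∀ x, 1 ≤ x → x ≤ 2 * l1.sum → upperPartner (l1 ++ (m - (l1.sum - l2.sum)) :: l2) x = upperPartner l1 x :=
    fun x h1 h2 => UP_left l1 ((m - (l1.sum - l2.sum)) :: l2) x h1 h2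
  have hUSm : ∀ x, 2 * l1.sum < x → x ≤ 2 * l1.sum + 2 * (m - (l1.sum - l2.sum)) →
      upperPartner (l1 ++ (m - (l1.sum - l2.sum)) :: l2) x = 4 * l1.sum + 2 * (m - (l1.sum - l2.sum)) + 1 - x := by
    intro x hx1 hx2
    rw [UP_right l1 ((m - (l1.sum - l2.sum)) :: l2) x hx1, UP_cons, if_pos (by omega)]
    omega
  have hUSr : ∀ x, 2 * l1.sum + 2 * (m - (l1.sum - l2.sum)) < x →
      upperPartner (l1 ++ (m - (l1.sum - l2.sum)) :: l2) x = 2 * l1.sum + 2 * (m - (l1.sum - l2.sum)) + upperPartner l2 (x - (2 * l1.sum + 2 * (m - (l1.sum - l2.sum)))) := by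
    intro x hx
    rw [show l1 ++ (m - (l1.sum - l2.sum)) :: l2 = (l1 ++ [(m - (l1.sum - l2.sum))]) ++ l2 by simp]
    have hs2 : (l1 ++ [(m - (l1.sum - l2.sum))]).sum = l1.sum + (m - (l1.sum - l2.sum)) := by simp
    rw [UP_right (l1 ++ [(m - (l1.sum - l2.sum))]) l2 x (by rw [hs2]; omega), hs2]
    have e : x - 2 * (l1.sum + (m - (l1.sum - l2.sum))) = x - (2 * l1.sum + 2 * (m - (l1.sum - l2.sum))) := by omega
    rw [e]; omega
  -- step/refl helpers
  have stepB : ∀ (p q : {k : ℕ // 1 ≤ k ∧ k ≤ 2 * (l1 ++ m :: l2).sum}),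
      (q.1 = upperPartner (l1 ++ m :: l2) p.1 ∨ q.1 = 2 * (l1 ++ m :: l2).sum + 1 - p.1) → Relation.EqvGen (fun a b : {k : ℕ // 1 ≤ k ∧ k ≤ 2 * (l1 ++ m :: l2).sum} => meanderRel (l1 ++ m :: l2) a.1 b.1) p q :=
    fun p q h => Relation.EqvGen.rel p q h
  have stepS : ∀ (p q : {k : ℕ // 1 ≤ k ∧ k ≤ 2 * (l1 ++ (m - (l1.sum - l2.sum)) :: l2).sum}),
      (q.1 = upperPartner (l1 ++ (m - (l1.sum - l2.sum)) :: l2) p.1 ∨ q.1 = 2 * (l1 ++ (m - (l1.sum - l2.sum)) :: l2).sum + 1 - p.1) → Relation.EqvGen (fun a b : {k : ℕ // 1 ≤ k ∧ k ≤ 2 * (l1 ++ (m - (l1.sum - l2.sum)) :: l2).sum} => meanderRel (l1 ++ (m - (l1.sum - l2.sum)) :: l2) a.1 b.1) p q :=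
    fun p q h => Relation.EqvGen.rel p q h
  have reflB : ∀ (p q : {k : ℕ // 1 ≤ k ∧ k ≤ 2 * (l1 ++ m :: l2).sum}), p.1 = q.1 → Relation.EqvGen (fun a b : {k : ℕ // 1 ≤ k ∧ k ≤ 2 * (l1 ++ m :: l2).sum} => meanderRel (l1 ++ m :: l2) a.1 b.1) p q := by
    intro p q h
    have e : p = q := Subtype.ext h
    subst e
    exact Relation.EqvGen.refl p
  have reflS : ∀ (p q : {k : ℕ // 1 ≤ k ∧ k ≤ 2 * (l1 ++ (m - (l1.sum - l2.sum)) :: l2).sum}), p.1 = q.1 → Relation.EqvGen (fun a b : {k : ℕ // 1 ≤ k ∧ k ≤ 2 * (l1 ++ (m - (l1.sum - l2.sum)) :: l2).sum} => meanderRel (l1 ++ (m - (l1.sum - l2.sum)) :: l2) a.1 b.1) p q := by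
    intro p q h
    have e : p = q := Subtype.ext h
    subst e
    exact Relation.EqvGen.refl p
  -- the nose bridge: w + 2d ~ w inside the big middle family
  have bridge : ∀ (w : ℕ) (p q : {k : ℕ // 1 ≤ k ∧ k ≤ 2 * (l1 ++ m :: l2).sum}), 1 ≤ w → 2 * l1.sum < w + 2 * (l1.sum - l2.sum) →
      w + 2 * (l1.sum - l2.sum) ≤ 2 * l1.sum + 2 * m → p.1 = w + 2 * (l1.sum - l2.sum) → q.1 = w → Relation.EqvGen (fun a b : {k : ℕ // 1 ≤ k ∧ k ≤ 2 * (l1 ++ m :: l2).sum} => meanderRel (l1 ++ m :: l2) a.1 b.1) p q := by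
    intro w p q h1 h2 h3 hp hq
    refine Relation.EqvGen.trans p ⟨4 * l1.sum + 2 * m + 1 - (w + 2 * (l1.sum - l2.sum)), by omega⟩ q
      (stepB _ _ (Or.inl ?_)) (stepB _ _ (Or.inr ?_))
    · show 4 * l1.sum + 2 * m + 1 - (w + 2 * (l1.sum - l2.sum)) = upperPartner (l1 ++ m :: l2) p.1
      rw [hp, hUBm _ h2 h3]
    · show q.1 = 2 * (l1 ++ m :: l2).sum + 1 - (4 * l1.sum + 2 * m + 1 - (w + 2 * (l1.sum - l2.sum)))
      rw [hq]; omega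
  -- psi-bridge for points in the left blocks
  have psibr : ∀ (w : ℕ) (p q : {k : ℕ // 1 ≤ k ∧ k ≤ 2 * (l1 ++ m :: l2).sum}), 1 ≤ w → w ≤ 2 * l1.sum →
      p.1 = IRpsi l2.sum m (l1.sum - l2.sum) w → q.1 = w → Relation.EqvGen (fun a b : {k : ℕ // 1 ≤ k ∧ k ≤ 2 * (l1 ++ m :: l2).sum} => meanderRel (l1 ++ m :: l2) a.1 b.1) p q := by
    intro w p q h1 h2 hp hq
    by_cases hc : w ≤ m + 2 * l2.sum
    · exact reflB p q (by rw [hp, hq]; unfold IRpsi; rw [if_pos hc])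
    · refine bridge w p q h1 (by omega) (by omega) ?_ hq
      rw [hp]; unfold IRpsi; rw [if_neg hc]
  -- P1 middle half lemma
  have midHalf : ∀ (x y : ℕ), 2 * l1.sum < x → x ≤ 2 * l1.sum + m →
      y = 4 * l1.sum + 2 * m + 1 - x → ∀ (p q : {k : ℕ // 1 ≤ k ∧ k ≤ 2 * (l1 ++ (m - (l1.sum - l2.sum)) :: l2).sum}),
      p.1 = IRrho l1.sum l2.sum m (l1.sum - l2.sum) x → q.1 = IRrho l1.sum l2.sum m (l1.sum - l2.sum) y → Relation.EqvGen (fun a b : {k : ℕ // 1 ≤ k ∧ k ≤ 2 * (l1 ++ (m - (l1.sum - l2.sum)) :: l2).sum} => meanderRel (l1 ++ (m - (l1.sum - l2.sum)) :: l2) a.1 b.1) p q := by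
    intro x y hx1 hx2 hy p q hp hq
    by_cases hc : x ≤ m + 2 * l2.sum
    · have e1 : IRrho l1.sum l2.sum m (l1.sum - l2.sum) x = x := by unfold IRrho; split_ifs <;> omega
      have e2 : IRrho l1.sum l2.sum m (l1.sum - l2.sum) y = y - 2 * (l1.sum - l2.sum) := by unfold IRrho; split_ifs <;> omega
      refine stepS p q (Or.inl ?_)
      show q.1 = upperPartner (l1 ++ (m - (l1.sum - l2.sum)) :: l2) p.1
      rw [hp, hq, e1, e2, hUSm x (by omega) (by omega)]
      omega
    · have e1 : IRrho l1.sum l2.sum m (l1.sum - l2.sum) x = 2 * (l1.sum + m + l2.sum) + 1 - x := by unfold IRrho; split_ifs <;> omega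
      have e2 : IRrho l1.sum l2.sum m (l1.sum - l2.sum) y = y - 2 * (l1.sum - l2.sum) := by unfold IRrho; split_ifs <;> omega
      exact reflS p q (by rw [hp, hq, e1, e2]; omega)
  -- P1 lower half lemma
  have lowHalf : ∀ (x y : ℕ), 1 ≤ x → x ≤ (l1.sum + m + l2.sum) → y = 2 * (l1 ++ m :: l2).sum + 1 - x →
      ∀ (p q : {k : ℕ // 1 ≤ k ∧ k ≤ 2 * (l1 ++ (m - (l1.sum - l2.sum)) :: l2).sum}), p.1 = IRrho l1.sum l2.sum m (l1.sum - l2.sum) x → q.1 = IRrho l1.sum l2.sum m (l1.sum - l2.sum) y → Relation.EqvGen (fun a b : {k : ℕ // 1 ≤ k ∧ k ≤ 2 * (l1 ++ (m - (l1.sum - l2.sum)) :: l2).sum} => meanderRel (l1 ++ (m - (l1.sum - l2.sum)) :: l2) a.1 b.1) p q := by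
    intro x y hx1 hx2 hy p q hp hq
    by_cases hc : x ≤ m + 2 * l2.sum
    · have e1 : IRrho l1.sum l2.sum m (l1.sum - l2.sum) x = x := by unfold IRrho; split_ifs <;> omega
      have e2 : IRrho l1.sum l2.sum m (l1.sum - l2.sum) y = y - 2 * (l1.sum - l2.sum) := by unfold IRrho; split_ifs <;> omega
      refine stepS p q (Or.inr ?_)
      show q.1 = 2 * (l1 ++ (m - (l1.sum - l2.sum)) :: l2).sum + 1 - p.1
      rw [hp, hq, e1, e2]; omega
    · by_cases hc2 : x ≤ 2 * l1.sum
      · have e1 : IRrho l1.sum l2.sum m (l1.sum - l2.sum) x = x := by unfold IRrho; split_ifs <;> omega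
        have e2 : IRrho l1.sum l2.sum m (l1.sum - l2.sum) y = 2 * (l1.sum + m + l2.sum) + 1 - y := by unfold IRrho; split_ifs <;> omega
        exact reflS p q (by rw [hp, hq, e1, e2]; omega)
      · have e1 : IRrho l1.sum l2.sum m (l1.sum - l2.sum) x = 2 * (l1.sum + m + l2.sum) + 1 - x := by unfold IRrho; split_ifs <;> omega
        have e2 : IRrho l1.sum l2.sum m (l1.sum - l2.sum) y = 2 * (l1.sum + m + l2.sum) + 1 - y := by unfold IRrho; split_ifs <;> omega
        refine Relation.EqvGen.symm _ _ (stepS q p (Or.inl ?_))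
        show p.1 = upperPartner (l1 ++ (m - (l1.sum - l2.sum)) :: l2) q.1
        rw [hp, hq, e1, e2, hUSm (2 * (l1.sum + m + l2.sum) + 1 - y) (by omega) (by omega)]
        omega
  -- P1 : rho maps big edges to small connectivity
  have hfgen : ∀ (x y : ℕ), 1 ≤ x → x ≤ 2 * (l1 ++ m :: l2).sum → 1 ≤ y → y ≤ 2 * (l1 ++ m :: l2).sum →
      meanderRel (l1 ++ m :: l2) x y → ∀ (p q : {k : ℕ // 1 ≤ k ∧ k ≤ 2 * (l1 ++ (m - (l1.sum - l2.sum)) :: l2).sum}),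
      p.1 = IRrho l1.sum l2.sum m (l1.sum - l2.sum) x → q.1 = IRrho l1.sum l2.sum m (l1.sum - l2.sum) y → Relation.EqvGen (fun a b : {k : ℕ // 1 ≤ k ∧ k ≤ 2 * (l1 ++ (m - (l1.sum - l2.sum)) :: l2).sum} => meanderRel (l1 ++ (m - (l1.sum - l2.sum)) :: l2) a.1 b.1) p q := by
    intro x y hx1 hx2 hy1 hy2 h p q hp hq
    unfold meanderRel at h
    rcases h with h | h
    · by_cases hc1 : x ≤ 2 * l1.sum
      · rw [hUBl x hx1 hc1] at h
        have hub := UP_bounds l1 x hx1 hc1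
        have e1 : IRrho l1.sum l2.sum m (l1.sum - l2.sum) x = x := by unfold IRrho; split_ifs <;> omega
        have e2 : IRrho l1.sum l2.sum m (l1.sum - l2.sum) y = y := by unfold IRrho; split_ifs <;> omega
        refine stepS p q (Or.inl ?_)
        show q.1 = upperPartner (l1 ++ (m - (l1.sum - l2.sum)) :: l2) p.1
        rw [hp, hq, e1, e2, hUSl x hx1 hc1]
        exact h
      · by_cases hc2 : x ≤ 2 * l1.sum + 2 * m
        · by_cases hc3 : x ≤ 2 * l1.sum + m
          · rw [hUBm x (by omega) hc2] at h
            exact midHalf x y (by omega) hc3 h p q hp hq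
          · rw [hUBm x (by omega) hc2] at h
            exact Relation.EqvGen.symm _ _
              (midHalf y x (by omega) (by omega) (by omega) q p hq hp)
        · rw [hUBr x (by omega)] at h
          have hub := UP_bounds l2 (x - (2 * l1.sum + 2 * m)) (by omega) (by omega)
          have e1 : IRrho l1.sum l2.sum m (l1.sum - l2.sum) x = x - 2 * (l1.sum - l2.sum) := by unfold IRrho; split_ifs <;> omega
          have e2 : IRrho l1.sum l2.sum m (l1.sum - l2.sum) y = y - 2 * (l1.sum - l2.sum) := by unfold IRrho; split_ifs <;> omega
          refine stepS p q (Or.inl ?_)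
          show q.1 = upperPartner (l1 ++ (m - (l1.sum - l2.sum)) :: l2) p.1
          rw [hp, hq, e1, e2, hUSr (x - 2 * (l1.sum - l2.sum)) (by omega)]
          have e3 : x - 2 * (l1.sum - l2.sum) - (2 * l1.sum + 2 * (m - (l1.sum - l2.sum))) = x - (2 * l1.sum + 2 * m) := by omega
          rw [e3]
          omega
    · by_cases hcx : x ≤ (l1.sum + m + l2.sum)
      · exact lowHalf x y hx1 hcx h p q hp hq
      · exact Relation.EqvGen.symm _ _
          (lowHalf y x hy1 (by omega) (by omega) q p hq hp)
  -- P2 middle half lemma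
  have midHalfS : ∀ (y z : ℕ), 2 * l1.sum < y → y ≤ 2 * l1.sum + (m - (l1.sum - l2.sum)) →
      z = 4 * l1.sum + 2 * (m - (l1.sum - l2.sum)) + 1 - y → ∀ (p q : {k : ℕ // 1 ≤ k ∧ k ≤ 2 * (l1 ++ m :: l2).sum}),
      p.1 = IRpsi l2.sum m (l1.sum - l2.sum) y → q.1 = IRpsi l2.sum m (l1.sum - l2.sum) z → Relation.EqvGen (fun a b : {k : ℕ // 1 ≤ k ∧ k ≤ 2 * (l1 ++ m :: l2).sum} => meanderRel (l1 ++ m :: l2) a.1 b.1) p q := by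
    intro y z hy1 hy2 hz p q hp hq
    have hzval : IRpsi l2.sum m (l1.sum - l2.sum) z = z + 2 * (l1.sum - l2.sum) := by unfold IRpsi; rw [if_neg (by omega)]
    by_cases hc : y ≤ m + 2 * l2.sum
    · have hyval : IRpsi l2.sum m (l1.sum - l2.sum) y = y := by unfold IRpsi; rw [if_pos hc]
      refine stepB p q (Or.inl ?_)
      show q.1 = upperPartner (l1 ++ m :: l2) p.1
      rw [hp, hq, hyval, hzval, hUBm y (by omega) (by omega)]
      omega
    · have hyval : IRpsi l2.sum m (l1.sum - l2.sum) y = y + 2 * (l1.sum - l2.sum) := by unfold IRpsi; rw [if_neg hc]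
      refine Relation.EqvGen.trans p ⟨y, by omega⟩ q ?_ (stepB _ _ (Or.inl ?_))
      · exact bridge y p _ (by omega) (by omega) (by omega) (by rw [hp, hyval]) rfl
      · show q.1 = upperPartner (l1 ++ m :: l2) y
        rw [hq, hzval, hUBm y (by omega) (by omega)]
        omega
  -- P2 lower half lemma
  have lowHalfS : ∀ (y z : ℕ), 1 ≤ y → y ≤ (l1 ++ (m - (l1.sum - l2.sum)) :: l2).sum → z = 2 * (l1 ++ (m - (l1.sum - l2.sum)) :: l2).sum + 1 - y →
      ∀ (p q : {k : ℕ // 1 ≤ k ∧ k ≤ 2 * (l1 ++ m :: l2).sum}), p.1 = IRpsi l2.sum m (l1.sum - l2.sum) y → q.1 = IRpsi l2.sum m (l1.sum - l2.sum) z → Relation.EqvGen (fun a b : {k : ℕ // 1 ≤ k ∧ k ≤ 2 * (l1 ++ m :: l2).sum} => meanderRel (l1 ++ m :: l2) a.1 b.1) p q := by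
    intro y z hy1 hy2 hz p q hp hq
    have hyval : IRpsi l2.sum m (l1.sum - l2.sum) y = y := by unfold IRpsi; rw [if_pos (by omega)]
    have hzval : IRpsi l2.sum m (l1.sum - l2.sum) z = z + 2 * (l1.sum - l2.sum) := by unfold IRpsi; rw [if_neg (by omega)]
    refine stepB p q (Or.inr ?_)
    show q.1 = 2 * (l1 ++ m :: l2).sum + 1 - p.1
    rw [hp, hq, hyval, hzval]; omega
  -- P2 : psi maps small edges to big connectivity
  have hggen : ∀ (y z : ℕ), 1 ≤ y → y ≤ 2 * (l1 ++ (m - (l1.sum - l2.sum)) :: l2).sum → 1 ≤ z → z ≤ 2 * (l1 ++ (m - (l1.sum - l2.sum)) :: l2).sum →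
      meanderRel (l1 ++ (m - (l1.sum - l2.sum)) :: l2) y z → ∀ (p q : {k : ℕ // 1 ≤ k ∧ k ≤ 2 * (l1 ++ m :: l2).sum}),
      p.1 = IRpsi l2.sum m (l1.sum - l2.sum) y → q.1 = IRpsi l2.sum m (l1.sum - l2.sum) z → Relation.EqvGen (fun a b : {k : ℕ // 1 ≤ k ∧ k ≤ 2 * (l1 ++ m :: l2).sum} => meanderRel (l1 ++ m :: l2) a.1 b.1) p q := by
    intro y z hy1 hy2 hz1 hz2 h p q hp hq
    unfold meanderRel at h
    rcases h with h | h
    · by_cases hc1 : y ≤ 2 * l1.sum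
      · rw [hUSl y hy1 hc1] at h
        have hub := UP_bounds l1 y hy1 hc1
        refine Relation.EqvGen.trans p ⟨y, by omega⟩ q (psibr y p _ hy1 hc1 hp rfl) ?_
        refine Relation.EqvGen.trans _ ⟨z, by omega⟩ q (stepB _ _ (Or.inl ?_)) ?_
        · show z = upperPartner (l1 ++ m :: l2) y
          rw [hUBl y hy1 hc1]
          exact h
        · exact Relation.EqvGen.symm _ _ (psibr z q _ (by omega) (by omega) hq rfl)
      · by_cases hc2 : y ≤ 2 * l1.sum + 2 * (m - (l1.sum - l2.sum))
        · by_cases hc3 : y ≤ 2 * l1.sum + (m - (l1.sum - l2.sum))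
          · rw [hUSm y (by omega) hc2] at h
            exact midHalfS y z (by omega) hc3 h p q hp hq
          · rw [hUSm y (by omega) hc2] at h
            exact Relation.EqvGen.symm _ _
              (midHalfS z y (by omega) (by omega) (by omega) q p hq hp)
        · rw [hUSr y (by omega)] at h
          have hub := UP_bounds l2 (y - (2 * l1.sum + 2 * (m - (l1.sum - l2.sum)))) (by omega) (by omega)
          have hyval : IRpsi l2.sum m (l1.sum - l2.sum) y = y + 2 * (l1.sum - l2.sum) := by unfold IRpsi; rw [if_neg (by omega)]
          have hzval : IRpsi l2.sum m (l1.sum - l2.sum) z = z + 2 * (l1.sum - l2.sum) := by unfold IRpsi; rw [if_neg (by omega)]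
          refine stepB p q (Or.inl ?_)
          show q.1 = upperPartner (l1 ++ m :: l2) p.1
          rw [hp, hq, hyval, hzval, hUBr (y + 2 * (l1.sum - l2.sum)) (by omega)]
          have e : y + 2 * (l1.sum - l2.sum) - (2 * l1.sum + 2 * m) = y - (2 * l1.sum + 2 * (m - (l1.sum - l2.sum))) := by omega
          rw [e]
          omega
    · by_cases hcy : y ≤ (l1 ++ (m - (l1.sum - l2.sum)) :: l2).sum
      · exact lowHalfS y z hy1 hcy h p q hp hq
      · exact Relation.EqvGen.symm _ _
          (lowHalfS z y hz1 (by omega) (by omega) q p hq hp)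
  -- P3 : psi ∘ rho is connected to the identity
  have hgfgen : ∀ (x : ℕ), 1 ≤ x → x ≤ 2 * (l1 ++ m :: l2).sum → ∀ (p q : {k : ℕ // 1 ≤ k ∧ k ≤ 2 * (l1 ++ m :: l2).sum}),
      p.1 = IRpsi l2.sum m (l1.sum - l2.sum) (IRrho l1.sum l2.sum m (l1.sum - l2.sum) x) → q.1 = x → Relation.EqvGen (fun a b : {k : ℕ // 1 ≤ k ∧ k ≤ 2 * (l1 ++ m :: l2).sum} => meanderRel (l1 ++ m :: l2) a.1 b.1) p q := by
    intro x hx1 hx2 p q hp hq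
    by_cases c1 : x ≤ m + 2 * l2.sum
    · exact reflB p q (by rw [hp, hq]; unfold IRrho IRpsi; split_ifs <;> omega)
    · by_cases c2 : x ≤ 2 * l1.sum
      · have e1 : IRrho l1.sum l2.sum m (l1.sum - l2.sum) x = x := by unfold IRrho; split_ifs <;> omega
        exact psibr x p q hx1 c2 (by rw [hp, e1]) hq
      · by_cases c3 : x ≤ 2 * l1.sum + m
        · have e1 : IRrho l1.sum l2.sum m (l1.sum - l2.sum) x = 2 * (l1.sum + m + l2.sum) + 1 - x := by unfold IRrho; split_ifs <;> omega
          have e2 : IRpsi l2.sum m (l1.sum - l2.sum) (2 * (l1.sum + m + l2.sum) + 1 - x) = 2 * (l1.sum + m + l2.sum) + 1 - x + 2 * (l1.sum - l2.sum) := by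
            unfold IRpsi; rw [if_neg (by omega)]
          refine Relation.EqvGen.trans p ⟨2 * (l1.sum + m + l2.sum) + 1 - x, by omega⟩ q ?_
            (stepB _ _ (Or.inr ?_))
          · exact bridge (2 * (l1.sum + m + l2.sum) + 1 - x) p _ (by omega) (by omega) (by omega)
              (by rw [hp, e1, e2]) rfl
          · show q.1 = 2 * (l1 ++ m :: l2).sum + 1 - (2 * (l1.sum + m + l2.sum) + 1 - x)
            rw [hq]; omega
        · exact reflB p q (by rw [hp, hq]; unfold IRrho IRpsi; split_ifs <;> omega)
  -- P4 : rho ∘ psi = id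
  have hfg' : ∀ v, 1 ≤ v → v ≤ 2 * (l1 ++ (m - (l1.sum - l2.sum)) :: l2).sum → IRrho l1.sum l2.sum m (l1.sum - l2.sum) (IRpsi l2.sum m (l1.sum - l2.sum) v) = v := by
    intro v h1 h2
    unfold IRrho IRpsi
    split_ifs <;> omega
  -- bounds
  have hrho : ∀ v, 1 ≤ v → v ≤ 2 * (l1 ++ m :: l2).sum → 1 ≤ IRrho l1.sum l2.sum m (l1.sum - l2.sum) v ∧ IRrho l1.sum l2.sum m (l1.sum - l2.sum) v ≤ 2 * (l1 ++ (m - (l1.sum - l2.sum)) :: l2).sum := by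
    intro v h1 h2
    unfold IRrho
    split_ifs <;> omega
  have hpsi : ∀ v, 1 ≤ v → v ≤ 2 * (l1 ++ (m - (l1.sum - l2.sum)) :: l2).sum → 1 ≤ IRpsi l2.sum m (l1.sum - l2.sum) v ∧ IRpsi l2.sum m (l1.sum - l2.sum) v ≤ 2 * (l1 ++ m :: l2).sum := by
    intro v h1 h2
    unfold IRpsi
    split_ifs <;> omega
  unfold Z
  refine card_quotient_eq (meanderSetoid (l1 ++ m :: l2)) (meanderSetoid (l1 ++ (m - (l1.sum - l2.sum)) :: l2))
    (fun a => ⟨IRrho l1.sum l2.sum m (l1.sum - l2.sum) a.1, hrho a.1 a.2.1 a.2.2⟩)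
    (fun b => ⟨IRpsi l2.sum m (l1.sum - l2.sum) b.1, hpsi b.1 b.2.1 b.2.2⟩) ?_ ?_ ?_ ?_
  · intro a b hab
    have hab' : Relation.EqvGen (fun a b : {k : ℕ // 1 ≤ k ∧ k ≤ 2 * (l1 ++ m :: l2).sum} => meanderRel (l1 ++ m :: l2) a.1 b.1) a b := hab
    clear hab
    show Relation.EqvGen (fun a b : {k : ℕ // 1 ≤ k ∧ k ≤ 2 * (l1 ++ (m - (l1.sum - l2.sum)) :: l2).sum} => meanderRel (l1 ++ (m - (l1.sum - l2.sum)) :: l2) a.1 b.1) _ _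
    induction hab' with
    | rel a b h => exact hfgen a.1 b.1 a.2.1 a.2.2 b.2.1 b.2.2 h _ _ rfl rfl
    | refl a => exact Relation.EqvGen.refl _
    | symm a b _ ih => exact Relation.EqvGen.symm _ _ ih
    | trans a b c _ _ ih1 ih2 => exact Relation.EqvGen.trans _ _ _ ih1 ih2
  · intro a b hab
    have hab' : Relation.EqvGen (fun a b : {k : ℕ // 1 ≤ k ∧ k ≤ 2 * (l1 ++ (m - (l1.sum - l2.sum)) :: l2).sum} => meanderRel (l1 ++ (m - (l1.sum - l2.sum)) :: l2) a.1 b.1) a b := hab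
    clear hab
    show Relation.EqvGen (fun a b : {k : ℕ // 1 ≤ k ∧ k ≤ 2 * (l1 ++ m :: l2).sum} => meanderRel (l1 ++ m :: l2) a.1 b.1) _ _
    induction hab' with
    | rel a b h => exact hggen a.1 b.1 a.2.1 a.2.2 b.2.1 b.2.2 h _ _ rfl rfl
    | refl a => exact Relation.EqvGen.refl _
    | symm a b _ ih => exact Relation.EqvGen.symm _ _ ih
    | trans a b c _ _ ih1 ih2 => exact Relation.EqvGen.trans _ _ _ ih1 ih2
  · intro a
    show Relation.EqvGen (fun a b : {k : ℕ // 1 ≤ k ∧ k ≤ 2 * (l1 ++ m :: l2).sum} => meanderRel (l1 ++ m :: l2) a.1 b.1) _ _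
    exact hgfgen a.1 a.2.1 a.2.2 _ _ rfl rfl
  · intro b
    show Relation.EqvGen (fun a b : {k : ℕ // 1 ≤ k ∧ k ≤ 2 * (l1 ++ (m - (l1.sum - l2.sum)) :: l2).sum} => meanderRel (l1 ++ (m - (l1.sum - l2.sum)) :: l2) a.1 b.1) _ _
    exact reflS _ _ (hfg' b.1 b.2.1 b.2.2)


/-- Inner nose retraction, general case: let m* be the middle family, i.e.
L* = α₁+⋯+α_{m*-1} < α/2 ≤ L* + α_{m*}, and R* = α_{m*+1}+⋯+αₙ.  If
0 < |L* − R*| < α_{m*}, then Z(α₁,…,αₙ) = Z(α₁,…,α_{m*-1}, α_{m*} − |L*−R*|,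
α_{m*+1},…,αₙ). -/
theorem inner_retraction_general (l1 l2 : List ℕ) (m : ℕ) (hm : 0 < m)
    (hpos1 : ∀ x ∈ l1, 0 < x) (hpos2 : ∀ x ∈ l2, 0 < x)
    (hmidL : 2 * l1.sum < (l1 ++ m :: l2).sum)
    (hmidR : (l1 ++ m :: l2).sum ≤ 2 * (l1.sum + m))
    (hlo : 0 < max l1.sum l2.sum - min l1.sum l2.sum)
    (hhi : max l1.sum l2.sum - min l1.sum l2.sum < m) :
    Z (l1 ++ m :: l2) = Z (l1 ++ (m - (max l1.sum l2.sum - min l1.sum l2.sum)) :: l2) := by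
  rcases lt_trichotomy l1.sum l2.sum with hlt | heq | hgt
  · have hmax : max l1.sum l2.sum - min l1.sum l2.sum = l2.sum - l1.sum := by omega
    rw [hmax]
    have h1 : (l1 ++ m :: l2).reverse = l2.reverse ++ m :: l1.reverse := by simp
    have h2 : (l1 ++ (m - (l2.sum - l1.sum)) :: l2).reverse
        = l2.reverse ++ (m - (l2.sum - l1.sum)) :: l1.reverse := by simp
    have hk := key l2.reverse l1.reverse m
      (by rw [List.sum_reverse, List.sum_reverse]; exact hlt)
      (by rw [List.sum_reverse, List.sum_reverse]; omega)
    rw [List.sum_reverse, List.sum_reverse] at hk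
    rw [Z_reverse (l1 ++ m :: l2), h1,
      Z_reverse (l1 ++ (m - (l2.sum - l1.sum)) :: l2), h2]
    exact hk
  · omega
  · have hmax : max l1.sum l2.sum - min l1.sum l2.sum = l1.sum - l2.sum := by omega
    rw [hmax]
    exact key l1 l2 m hgt (by omega)
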